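/- For every N ≥ 2, the hypothesis class H* over X = {1,...,2N} consisting of all singletons {i}, all complements of singletons X\{i}, the empty set, and the full set X, has threshold dimension exactly 3. -/

import Mathlib

def HasThresh {X : Type*} (H : Set (Set X)) (k : ℕ) : Prop :=
  ∃ (x : Fin k → X) (h : Fin (k + 1) → Set X),
    (∀ i, h i ∈ H) ∧ ∀ i j, x j ∈ h i ↔ (j : ℕ) + 1 ≤ (i : ℕ)

noncomputable def tdim {X : Type*} (H : Set (Set X)) : ℕ∞ :=
  sSup {n : ℕ∞ | ∃ k : ℕ, HasThresh H k ∧ n = k}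

/-- All singletons, complements of singletons, the empty set and the full set over `[2N]`. -/
def Hstar (N : ℕ) : Set (Set (Fin (2 * N))) :=
  {s | (∃ i, s = {i}) ∨ (∃ i, s = {i}ᶜ) ∨ s = (∅ : Set (Fin (2 * N))) ∨ s = Set.univ}

lemma hasThresh_mono {X : Type*} {H : Set (Set X)} {k m : ℕ} (hk : HasThresh H k)
    (hm : m ≤ k) : HasThresh H m := by
  obtain ⟨x, h, hmem, hcond⟩ := hk
  refine ⟨fun j => x (Fin.castLE hm j), fun i => h (Fin.castLE (by omega) i),
    fun i => hmem _, fun i j => ?_⟩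
  exact hcond (Fin.castLE (by omega) i) (Fin.castLE hm j)

lemma not_hasThresh_four (N : ℕ) : ¬ HasThresh (Hstar N) 4 := by
  rintro ⟨x, h, hmem, hcond⟩
  have h01 : x 0 ≠ x 1 := by
    intro e
    have h1 : x 0 ∈ h 1 := (hcond 1 0).mpr (by decide)
    have h2 : x 1 ∉ h 1 := fun hm => absurd ((hcond 1 1).mp hm) (by decide)
    exact h2 (e ▸ h1)
  have h23 : x 2 ≠ x 3 := by
    intro e
    have h1 : x 2 ∈ h 3 := (hcond 3 2).mpr (by decide)
    have h2 : x 3 ∉ h 3 := fun hm => absurd ((hcond 3 3).mp hm) (by decide)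
    exact h2 (e ▸ h1)
  have m0 : x 0 ∈ h 2 := (hcond 2 0).mpr (by decide)
  have m1 : x 1 ∈ h 2 := (hcond 2 1).mpr (by decide)
  have m2 : x 2 ∉ h 2 := fun hm => absurd ((hcond 2 2).mp hm) (by decide)
  have m3 : x 3 ∉ h 2 := fun hm => absurd ((hcond 2 3).mp hm) (by decide)
  rcases hmem 2 with ⟨i, hi⟩ | ⟨i, hi⟩ | hi | hi
  · rw [hi] at m0 m1
    exact h01 (m0.trans m1.symm)
  · rw [hi] at m2 m3
    simp only [Set.mem_compl_iff, Set.mem_singleton_iff, not_not] at m2 m3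
    exact h23 (m2.trans m3.symm)
  · rw [hi] at m0; exact m0
  · rw [hi] at m3; exact m3 (Set.mem_univ _)

theorem stmt_4 (N : ℕ) (hN : 2 ≤ N) : tdim (Hstar N) = 3 := by
  apply le_antisymm
  · apply sSup_le
    rintro n ⟨k, hk, rfl⟩
    have hk3 : k ≤ 3 := by
      by_contra hlt
      exact not_hasThresh_four N (hasThresh_mono hk (by omega))
    exact_mod_cast hk3
  · apply le_sSup
    refine ⟨3, ?_, rfl⟩
    have hlt : ∀ m : ℕ, m < 3 → m < 2 * N := by omega
    refine ⟨fun j => ⟨j, hlt j j.isLt⟩, ![∅, {⟨0, by omega⟩}, {⟨2, by omega⟩}ᶜ, Set.univ],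
      ?_, ?_⟩
    · intro i
      fin_cases i
      · exact Or.inr (Or.inr (Or.inl rfl))
      · exact Or.inl ⟨_, rfl⟩
      · exact Or.inr (Or.inl ⟨_, rfl⟩)
      · exact Or.inr (Or.inr (Or.inr rfl))
    · intro i j
      fin_cases i <;> fin_cases j <;>
        simp [Fin.ext_iff, Set.mem_singleton_iff]
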